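/- arXiv:2002.05456 — 3 statements merged into one kernel-verified Lean document; each statement's English description precedes it below -/
import Mathlib

section
/- For every integer k ≥ 1, every real σ with 1 ≤ σ ≤ 1.15, and every real t ≥ 1, one has Ξ(σ,k,t,0) ≤ 0; indeed, at fixed σ the function t ↦ Ξ(σ,k,t,0) is increasing for t ≥ 1 with limit 0 as t → ∞. -/
open Filter

/-- `κ = 1/√5`. -/
noncomputable def κ : ℝ := 1 / Real.sqrt 5

/-- `σ₁(σ) = (1 + √(1 + 4σ²))/2`. -/
noncomputable def σ₁ (σ : ℝ) : ℝ := (1 + Real.sqrt (1 + 4 * σ ^ 2)) / 2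

/-- `Ξ(σ,k,t,δ)`. -/
noncomputable def Xi (σ : ℝ) (k : ℕ) (t δ : ℝ) : ℝ :=
  1 / 4 * Real.log (1 + ((σ + δ) / (k * t)) ^ 2) -
    κ / 4 * Real.log (1 + ((σ₁ σ + δ) / (k * t)) ^ 2) -
    (σ + δ) / (2 * ((σ + δ) ^ 2 + k ^ 2 * t ^ 2)) +
    κ * (σ₁ σ + δ) / (2 * ((σ₁ σ + δ) ^ 2 + k ^ 2 * t ^ 2))

set_option maxHeartbeats 1000000

section
variable {σ s c x : ℝ}

private lemma ov3 (hs0 : 1.618 ≤ s) (hs2 : s ≤ 1.754) :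
    (0:ℝ) ≤ 2 - (s^2-s) - 0.4473*(s*(2-s)) := by nlinarith [sq_nonneg (s-1.754)]

private lemma ov2 (hs0 : 1.618 ≤ s) (hs2 : s ≤ 1.754) :
    (0:ℝ) ≤ 4*s^2 - 2*(s^2-s)*s^2 - (s^2-s)^2 - 2*0.447*s*(2-s)*(s^2-s) + 0.447*s^4 := by
  have hsp : (0:ℝ) ≤ s := by linarith
  have hb : (0:ℝ) ≤ (1.754 - s) * (s - 1.618) := by nlinarith
  nlinarith [hb, mul_nonneg hb hsp, mul_nonneg (mul_nonneg hb hsp) hsp, sq_nonneg (s-1.69)]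

private lemma ovc2 (hs0 : 1.618 ≤ s) (hs2 : s ≤ 1.754) :
    (0:ℝ) ≤ -2*s*(2-s)*(s^2-s) + s^4 := by
  have hsp : (0:ℝ) ≤ s := by linarith
  have hb : (0:ℝ) ≤ (1.754 - s) * (s - 1.618) := by nlinarith
  nlinarith [hb, mul_nonneg hb hsp, mul_nonneg (mul_nonneg hb hsp) hsp]

private lemma ov1 (hs0 : 1.618 ≤ s) (hs2 : s ≤ 1.754) :
    (0:ℝ) ≤ 2*s^4 - (s^2-s)*s^4 - 2*(s^2-s)^2*s^2
        + 0.447*(-(s*(2-s)*(s^2-s)^2) + 2*s^4*(s^2-s)) := by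
  have hsp : (0:ℝ) ≤ s := by linarith
  have hb : (0:ℝ) ≤ (1.754 - s) * (s - 1.618) := by nlinarith
  nlinarith [hb, mul_nonneg hb hsp, mul_nonneg (mul_nonneg hb hsp) hsp,
    mul_nonneg (mul_nonneg (mul_nonneg hb hsp) hsp) hsp,
    mul_nonneg (mul_nonneg (mul_nonneg (mul_nonneg hb hsp) hsp) hsp) hsp, sq_nonneg (s-1.69)]

private lemma ovc1 (hs0 : 1.618 ≤ s) (hs2 : s ≤ 1.754) :
    (0:ℝ) ≤ -(s*(2-s)*(s^2-s)^2) + 2*s^4*(s^2-s) := by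
  have hsp : (0:ℝ) ≤ s := by linarith
  have hb : (0:ℝ) ≤ (1.754 - s) * (s - 1.618) := by nlinarith
  nlinarith [hb, mul_nonneg hb hsp, mul_nonneg (mul_nonneg hb hsp) hsp,
    mul_nonneg (mul_nonneg (mul_nonneg hb hsp) hsp) hsp,
    mul_nonneg (mul_nonneg (mul_nonneg (mul_nonneg hb hsp) hsp) hsp) hsp]

private lemma ovF1 (hs0 : 1.618 ≤ s) (hs2 : s ≤ 1.754) :
    (0:ℝ) ≤ -(s*(2-s)*(s^2-s)^2) + 2*s^4*(s^2-s) + s^4*(s^2-s)^2 := by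
  have hsp : (0:ℝ) ≤ s := by linarith
  have hb : (0:ℝ) ≤ (1.754 - s) * (s - 1.618) := by nlinarith
  nlinarith [hb, mul_nonneg hb hsp, mul_nonneg (mul_nonneg hb hsp) hsp,
    mul_nonneg (mul_nonneg (mul_nonneg hb hsp) hsp) hsp,
    mul_nonneg (mul_nonneg (mul_nonneg (mul_nonneg hb hsp) hsp) hsp) hsp,
    mul_nonneg (mul_nonneg (mul_nonneg (mul_nonneg (mul_nonneg hb hsp) hsp) hsp) hsp) hsp,
    mul_nonneg (mul_nonneg (mul_nonneg (mul_nonneg (mul_nonneg (mul_nonneg hb hsp) hsp) hsp) hsp) hsp) hsp]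

private lemma ov10a (hs0 : 1.618 ≤ s) (hs2 : s ≤ 1.686) :
    (0:ℝ) ≤ 2*s^4*(s^2-s+1.075)
          + 2.075*(-(s^2-s)*s^4 - 2*(s^2-s)^2*s^2 - 0.447*s*(2-s)*(s^2-s)^2
            + 2*0.447*s^4*(s^2-s) + 0.447*s^4*(s^2-s)^2 - (s^2-s)^2*s^4) := by
  have hsp : (0:ℝ) ≤ s := by linarith
  have hb : (0:ℝ) ≤ (1.686 - s) * (s - 1.618) := by nlinarith
  nlinarith [hb, mul_nonneg hb hsp, mul_nonneg (mul_nonneg hb hsp) hsp,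
    mul_nonneg (mul_nonneg (mul_nonneg hb hsp) hsp) hsp,
    mul_nonneg (mul_nonneg (mul_nonneg (mul_nonneg hb hsp) hsp) hsp) hsp,
    mul_nonneg (mul_nonneg (mul_nonneg (mul_nonneg (mul_nonneg hb hsp) hsp) hsp) hsp) hsp,
    mul_nonneg (mul_nonneg (mul_nonneg (mul_nonneg (mul_nonneg (mul_nonneg hb hsp) hsp) hsp) hsp) hsp) hsp,
    sq_nonneg (s - 1.686), sq_nonneg (s-1.65)]

private lemma ov10b (hs0 : 1.685 ≤ s) (hs2 : s ≤ 1.754) :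
    (0:ℝ) ≤ 2*s^4*(s^2-s+1.23625)
          + 2.225*(-(s^2-s)*s^4 - 2*(s^2-s)^2*s^2 - 0.447*s*(2-s)*(s^2-s)^2
            + 2*0.447*s^4*(s^2-s) + 0.447*s^4*(s^2-s)^2 - (s^2-s)^2*s^4) := by
  have hsp : (0:ℝ) ≤ s := by linarith
  have hb : (0:ℝ) ≤ (1.754 - s) * (s - 1.685) := by nlinarith
  nlinarith [hb, mul_nonneg hb hsp, mul_nonneg (mul_nonneg hb hsp) hsp,
    mul_nonneg (mul_nonneg (mul_nonneg hb hsp) hsp) hsp,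
    mul_nonneg (mul_nonneg (mul_nonneg (mul_nonneg hb hsp) hsp) hsp) hsp,
    mul_nonneg (mul_nonneg (mul_nonneg (mul_nonneg (mul_nonneg hb hsp) hsp) hsp) hsp) hsp,
    mul_nonneg (mul_nonneg (mul_nonneg (mul_nonneg (mul_nonneg (mul_nonneg hb hsp) hsp) hsp) hsp) hsp) hsp,
    sq_nonneg (s - 1.754), sq_nonneg (s-1.72)]

private lemma hq3' (h1 : 1 ≤ σ) (hs0 : 1.618 ≤ s) (hs2 : s ≤ 1.754)
    (hc0 : 0.447 ≤ c) (hc1 : c ≤ 0.4473) :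
    0 ≤ 2*σ - (s^2-s) - c*(s*(2-s)) := by
  have hC : (0:ℝ) ≤ (0.4473 - c) * (s*(2-s)) := by
    apply mul_nonneg (by linarith); nlinarith
  have := ov3 hs0 hs2
  nlinarith [hC, this]

private lemma hq2' (h1 : 1 ≤ σ) (hs0 : 1.618 ≤ s) (hs2 : s ≤ 1.754)
    (hc0 : 0.447 ≤ c) :
    0 ≤ 4*σ*s^2 - 2*(s^2-s)*s^2 - (s^2-s)^2 - 2*c*s*(2-s)*(s^2-s) + c*s^4 := by
  have hC := mul_nonneg (by linarith : (0:ℝ) ≤ c - 0.447) (ovc2 hs0 hs2)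
  have h1v := ov2 hs0 hs2
  have hA : (0:ℝ) ≤ (σ - 1) * s^2 := mul_nonneg (by linarith) (sq_nonneg s)
  nlinarith [hC, h1v, hA]

private lemma hq1' (h1 : 1 ≤ σ) (hs0 : 1.618 ≤ s) (hs2 : s ≤ 1.754)
    (hc0 : 0.447 ≤ c) :
    0 ≤ 2*σ*s^4 - (s^2-s)*s^4 - 2*(s^2-s)^2*s^2
      + c*(-(s*(2-s)*(s^2-s)^2) + 2*s^4*(s^2-s)) := by
  have hC := mul_nonneg (by linarith : (0:ℝ) ≤ c - 0.447) (ovc1 hs0 hs2)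
  have h1v := ov1 hs0 hs2
  have hA : (0:ℝ) ≤ (σ - 1) * s^4 := mul_nonneg (by linarith) (by positivity)
  nlinarith [hC, h1v, hA]

private lemma hq10' (h1 : 1 ≤ σ) (h2 : σ ≤ 1.15) (hσ2 : σ^2 = s^2 - s)
    (hs0 : 1.618 ≤ s) (hs2 : s ≤ 1.754) (hs3 : σ ≤ 1.075 → s ≤ 1.686)
    (hs4 : 1.075 ≤ σ → 1.685 ≤ s) (hc0 : 0.447 ≤ c) :
    0 ≤ 2*σ*s^4 - (s^2-s)*s^4 - 2*(s^2-s)^2*s^2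
      + c*(-(s*(2-s)*(s^2-s)^2) + 2*s^4*(s^2-s) + s^4*(s^2-s)^2) - (s^2-s)^2*s^4 := by
  have hcF1 := mul_nonneg (by linarith : (0:ℝ) ≤ c - 0.447) (ovF1 hs0 hs2)
  have hs4' : (0:ℝ) ≤ s^4 := by positivity
  rcases le_total σ 1.075 with hcase | hcase
  · have hlin : 0 ≤ 2.075 * σ - (s^2 - s + 1.075) := by nlinarith [hσ2]
    nlinarith [mul_nonneg hlin hs4', ov10a hs0 (hs3 hcase), hcF1]
  · have hlin : 0 ≤ 2.225 * σ - (s^2 - s + 1.23625) := by nlinarith [hσ2]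
    nlinarith [mul_nonneg hlin hs4', ov10b (hs4 hcase) hs2, hcF1]

lemma Q_nonneg (h1 : 1 ≤ σ) (h2 : σ ≤ 1.15) (hσ2 : σ^2 = s^2 - s)
    (hs0 : 1.618 ≤ s) (hs2 : s ≤ 1.754) (hs3 : σ ≤ 1.075 → s ≤ 1.686)
    (hs4 : 1.075 ≤ σ → 1.685 ≤ s) (hc0 : 0.447 ≤ c) (hc1 : c ≤ 0.4473)
    (hx : 1 ≤ x) :
    c * s * ((2 - s) * x - s ^ 3) * (x + σ ^ 2) ^ 2
      ≤ σ * ((2 - σ) * x - σ ^ 3) * (x + s ^ 2) ^ 2 := by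
  have hx0 : (0:ℝ) ≤ x := by linarith
  have hq3 := hq3' h1 hs0 hs2 hc0 hc1
  have hq2 := hq2' h1 hs0 hs2 hc0
  have hq1 := hq1' h1 hs0 hs2 hc0
  have hq10 := hq10' h1 h2 hσ2 hs0 hs2 hs3 hs4 hc0
  have key : σ * ((2 - σ) * x - σ ^ 3) * (x + s ^ 2) ^ 2
      - c * s * ((2 - s) * x - s ^ 3) * (x + σ ^ 2) ^ 2
      = (2*σ - (s^2-s) - c*(s*(2-s)))*x^3
        + (4*σ*s^2 - 2*(s^2-s)*s^2 - (s^2-s)^2 - 2*c*s*(2-s)*(s^2-s) + c*s^4)*x^2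
        + (2*σ*s^4 - (s^2-s)*s^4 - 2*(s^2-s)^2*s^2
            + c*(-(s*(2-s)*(s^2-s)^2) + 2*s^4*(s^2-s)))*x
        + (c*(s^4*(s^2-s)^2) - (s^2-s)^2*s^4) := by
    linear_combination (-(x*(x+s^2)^2) - (σ^2 + (s^2-s))*(x+s^2)^2
      - c*s*((2-s)*x - s^3)*(2*x + σ^2 + (s^2-s))) * hσ2
  nlinarith [key, mul_nonneg (mul_nonneg (mul_nonneg hq3 hx0) hx0) hx0,
    mul_nonneg (mul_nonneg hq2 hx0) hx0, mul_nonneg hq1 (sub_nonneg.2 hx), hq10]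
end

set_option maxHeartbeats 2000000 in
lemma Xi_deriv_eq (σ s K t : ℝ) (ht : 0 < t) (hK : 0 < K) (hσ : 0 < σ) (hs : 0 < s) :
    1/4 * (σ^2 * (-(K^2*(2*t)) / (K^2*t^2)^2) / (1 + σ^2 * (K^2*t^2)⁻¹))
     - κ/4 * (s^2 * (-(K^2*(2*t)) / (K^2*t^2)^2) / (1 + s^2 * (K^2*t^2)⁻¹))
     - σ * (-(2*(K^2*(2*t))) / (2*(σ^2 + K^2*t^2))^2)
     + κ*s * (-(2*(K^2*(2*t))) / (2*(s^2 + K^2*t^2))^2)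
     = (σ*((2-σ)*(K^2*t^2) - σ^3)*((K^2*t^2)+s^2)^2
        - κ*s*((2-s)*(K^2*t^2) - s^3)*((K^2*t^2)+σ^2)^2)
       / (2*t*((K^2*t^2)+σ^2)^2*((K^2*t^2)+s^2)^2) := by
  have h1 : (K^2*t^2) + σ^2 ≠ 0 := by positivity
  have h2 : (K^2*t^2) + s^2 ≠ 0 := by positivity
  have h3 : (K^2*t^2) ≠ 0 := by positivity
  have h4 : (1:ℝ) + σ^2 * (K^2*t^2)⁻¹ ≠ 0 := by positivity
  have h5 : (1:ℝ) + s^2 * (K^2*t^2)⁻¹ ≠ 0 := by positivity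
  field_simp
  ring


set_option maxHeartbeats 4000000 in
/-- For `k ≥ 1`, `1 ≤ σ ≤ 1.15` and `t ≥ 1`: `Ξ(σ,k,t,0) ≤ 0`; indeed at
fixed `σ` the map `t ↦ Ξ(σ,k,t,0)` is increasing on `t ≥ 1` with limit `0`
as `t → ∞`. -/
theorem Xi_delta_zero_nonpos (k : ℕ) (hk : 1 ≤ k) (σ : ℝ)
    (hσ : 1 ≤ σ) (hσ' : σ ≤ 1.15) :
    (∀ t : ℝ, 1 ≤ t → Xi σ k t 0 ≤ 0) ∧
    MonotoneOn (fun t => Xi σ k t 0) (Set.Ici 1) ∧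
    Tendsto (fun t => Xi σ k t 0) atTop (nhds 0) := by
  have hK1 : (1:ℝ) ≤ (k:ℝ) := by exact_mod_cast hk
  have hK0 : (0:ℝ) < (k:ℝ) := by linarith
  set s : ℝ := σ₁ σ with hsdef
  -- basic facts about s
  have hsqrt : Real.sqrt (1 + 4*σ^2) ^ 2 = 1 + 4*σ^2 := Real.sq_sqrt (by positivity)
  have hs_eq : s^2 = s + σ^2 := by
    rw [hsdef]; unfold σ₁; nlinarith [hsqrt]
  have hs_pos : 0 < s := by
    rw [hsdef]; unfold σ₁; nlinarith [Real.sqrt_nonneg (1 + 4*σ^2)]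
  have hσ2 : σ^2 = s^2 - s := by linarith
  have hs0 : 1.618 ≤ s := by nlinarith [hs_eq, hs_pos]
  have hs2 : s ≤ 1.754 := by nlinarith [hs_eq, hs_pos]
  have hs3 : σ ≤ 1.075 → s ≤ 1.686 := fun h => by nlinarith [hs_eq, hs_pos]
  have hs4 : 1.075 ≤ σ → 1.685 ≤ s := fun h => by nlinarith [hs_eq, hs_pos]
  -- facts about κ
  have h5 : Real.sqrt 5 ^ 2 = 5 := Real.sq_sqrt (by norm_num)
  have h5p : (0:ℝ) < Real.sqrt 5 := Real.sqrt_pos.2 (by norm_num)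
  have hc0 : 0.447 ≤ κ := by
    rw [κ, le_div_iff₀ h5p]; nlinarith
  have hc1 : κ ≤ 0.4473 := by
    rw [κ, div_le_iff₀ h5p]; nlinarith
  -- the nice form g of the function
  set g : ℝ → ℝ := fun u => 1/4 * Real.log (1 + σ^2 * ((k:ℝ)^2*u^2)⁻¹)
      - κ/4 * Real.log (1 + s^2 * ((k:ℝ)^2*u^2)⁻¹)
      - σ * (2*(σ^2 + (k:ℝ)^2*u^2))⁻¹ + κ*s * (2*(s^2 + (k:ℝ)^2*u^2))⁻¹ with hgdef
  have hfg : (fun u => Xi σ k u 0) = g := by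
    funext u
    simp only [hgdef, Xi, add_zero, div_pow, div_eq_mul_inv, inv_pow, mul_pow, hsdef]
  -- derivative
  have hderiv : ∀ t : ℝ, 0 < t → HasDerivAt g
      (1/4 * (σ^2 * (-((k:ℝ)^2*(2*t)) / ((k:ℝ)^2*t^2)^2) / (1 + σ^2 * ((k:ℝ)^2*t^2)⁻¹))
       - κ/4 * (s^2 * (-((k:ℝ)^2*(2*t)) / ((k:ℝ)^2*t^2)^2) / (1 + s^2 * ((k:ℝ)^2*t^2)⁻¹))
       - σ * (-(2*((k:ℝ)^2*(2*t))) / (2*(σ^2 + (k:ℝ)^2*t^2))^2)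
       + κ*s * (-(2*((k:ℝ)^2*(2*t))) / (2*(s^2 + (k:ℝ)^2*t^2))^2)) t := by
    intro t ht
    have hKt : (0:ℝ) < (k:ℝ)^2*t^2 := by positivity
    have hKt' : ((k:ℝ)^2*t^2) ≠ 0 := ne_of_gt hKt
    have h1 : HasDerivAt (fun u : ℝ => (k:ℝ)^2*u^2) ((k:ℝ)^2*(2*t)) t := by
      simpa using (hasDerivAt_pow 2 t).const_mul ((k:ℝ)^2)
    have hinv := h1.inv hKt'
    have hlog1 : HasDerivAt (fun u : ℝ => 1/4 * Real.log (1 + σ^2 * ((k:ℝ)^2*u^2)⁻¹))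
        (1/4 * (σ^2 * (-((k:ℝ)^2*(2*t)) / ((k:ℝ)^2*t^2)^2) / (1 + σ^2 * ((k:ℝ)^2*t^2)⁻¹))) t := by
      refine (HasDerivAt.log ?_ ?_).const_mul (1/4)
      · exact (hinv.const_mul (σ^2)).const_add 1
      · have : (0:ℝ) < 1 + σ^2 * ((k:ℝ)^2*t^2)⁻¹ := by positivity
        exact ne_of_gt this
    have hlog2 : HasDerivAt (fun u : ℝ => κ/4 * Real.log (1 + s^2 * ((k:ℝ)^2*u^2)⁻¹))
        (κ/4 * (s^2 * (-((k:ℝ)^2*(2*t)) / ((k:ℝ)^2*t^2)^2) / (1 + s^2 * ((k:ℝ)^2*t^2)⁻¹))) t := by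
      refine (HasDerivAt.log ?_ ?_).const_mul (κ/4)
      · exact (hinv.const_mul (s^2)).const_add 1
      · have : (0:ℝ) < 1 + s^2 * ((k:ℝ)^2*t^2)⁻¹ := by positivity
        exact ne_of_gt this
    have hr1 : HasDerivAt (fun u : ℝ => σ * (2*(σ^2 + (k:ℝ)^2*u^2))⁻¹)
        (σ * (-(2*((k:ℝ)^2*(2*t))) / (2*(σ^2 + (k:ℝ)^2*t^2))^2)) t := by
      have hne : (2*(σ^2 + (k:ℝ)^2*t^2)) ≠ 0 := by positivity
      exact (((h1.const_add (σ^2)).const_mul 2).inv hne).const_mul σ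
    have hr2 : HasDerivAt (fun u : ℝ => κ*s * (2*(s^2 + (k:ℝ)^2*u^2))⁻¹)
        (κ*s * (-(2*((k:ℝ)^2*(2*t))) / (2*(s^2 + (k:ℝ)^2*t^2))^2)) t := by
      have hne : (2*(s^2 + (k:ℝ)^2*t^2)) ≠ 0 := by positivity
      exact (((h1.const_add (s^2)).const_mul 2).inv hne).const_mul (κ*s)
    exact ((hlog1.sub hlog2).sub hr1).add hr2
  -- derivative nonneg
  have hVnn : ∀ t : ℝ, 1 ≤ t →
      0 ≤ (1/4 * (σ^2 * (-((k:ℝ)^2*(2*t)) / ((k:ℝ)^2*t^2)^2) / (1 + σ^2 * ((k:ℝ)^2*t^2)⁻¹))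
       - κ/4 * (s^2 * (-((k:ℝ)^2*(2*t)) / ((k:ℝ)^2*t^2)^2) / (1 + s^2 * ((k:ℝ)^2*t^2)⁻¹))
       - σ * (-(2*((k:ℝ)^2*(2*t))) / (2*(σ^2 + (k:ℝ)^2*t^2))^2)
       + κ*s * (-(2*((k:ℝ)^2*(2*t))) / (2*(s^2 + (k:ℝ)^2*t^2))^2)) := by
    intro t ht
    have ht0 : (0:ℝ) < t := by linarith
    have hkt : (1:ℝ) ≤ (k:ℝ)*t := by nlinarith [mul_le_mul hK1 ht zero_le_one (by linarith : (0:ℝ) ≤ (k:ℝ))]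
    have hx : (1:ℝ) ≤ (k:ℝ)^2*t^2 := by nlinarith [hkt, sq_nonneg ((k:ℝ)*t - 1)]
    have hx0 : (0:ℝ) < (k:ℝ)^2*t^2 := by positivity
    have hQ := Q_nonneg hσ hσ' hσ2 hs0 hs2 hs3 hs4 hc0 hc1 hx
    have key : (1/4 * (σ^2 * (-((k:ℝ)^2*(2*t)) / ((k:ℝ)^2*t^2)^2) / (1 + σ^2 * ((k:ℝ)^2*t^2)⁻¹))
       - κ/4 * (s^2 * (-((k:ℝ)^2*(2*t)) / ((k:ℝ)^2*t^2)^2) / (1 + s^2 * ((k:ℝ)^2*t^2)⁻¹))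
       - σ * (-(2*((k:ℝ)^2*(2*t))) / (2*(σ^2 + (k:ℝ)^2*t^2))^2)
       + κ*s * (-(2*((k:ℝ)^2*(2*t))) / (2*(s^2 + (k:ℝ)^2*t^2))^2))
       = (σ*((2-σ)*((k:ℝ)^2*t^2) - σ^3)*(((k:ℝ)^2*t^2)+s^2)^2
          - κ*s*((2-s)*((k:ℝ)^2*t^2) - s^3)*(((k:ℝ)^2*t^2)+σ^2)^2)
         / (2*t*(((k:ℝ)^2*t^2)+σ^2)^2*(((k:ℝ)^2*t^2)+s^2)^2) := by
      exact Xi_deriv_eq σ s (k:ℝ) t ht0 (by linarith) (by linarith) hs_pos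
    rw [key]
    apply div_nonneg (by linarith [hQ]) (by positivity)
  -- monotonicity of g
  have hgc : ContinuousOn g (Set.Ici 1) := fun t ht =>
    ((hderiv t (lt_of_lt_of_le zero_lt_one ht)).continuousAt).continuousWithinAt
  have hgd : DifferentiableOn ℝ g (interior (Set.Ici 1)) := by
    rw [interior_Ici]
    exact fun t ht => ((hderiv t (lt_trans zero_lt_one ht)).differentiableAt).differentiableWithinAt
  have hgm : MonotoneOn g (Set.Ici 1) := by
    refine monotoneOn_of_deriv_nonneg (convex_Ici 1) hgc hgd ?_
    rw [interior_Ici]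
    intro t ht
    rw [(hderiv t (lt_trans zero_lt_one ht)).deriv]
    exact hVnn t (le_of_lt ht)
  -- limit of g
  have hsq : Tendsto (fun u : ℝ => (k:ℝ)^2*u^2) atTop atTop :=
    (tendsto_pow_atTop (by norm_num : 2 ≠ 0)).const_mul_atTop (by positivity)
  have hinv0 : Tendsto (fun u : ℝ => ((k:ℝ)^2*u^2)⁻¹) atTop (nhds 0) :=
    hsq.inv_tendsto_atTop
  have hlog : ∀ a : ℝ, Tendsto (fun u : ℝ => Real.log (1 + a * ((k:ℝ)^2*u^2)⁻¹)) atTop (nhds 0) := by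
    intro a
    have h1 : Tendsto (fun u : ℝ => 1 + a * ((k:ℝ)^2*u^2)⁻¹) atTop (nhds 1) := by
      have := (hinv0.const_mul a).const_add 1
      simpa using this
    have := (Real.continuousAt_log one_ne_zero).tendsto.comp h1
    simpa [Function.comp_def] using this
  have hrat : ∀ a : ℝ, Tendsto (fun u : ℝ => (2*(a + (k:ℝ)^2*u^2))⁻¹) atTop (nhds 0) := by
    intro a
    have h1 : Tendsto (fun u : ℝ => 2*(a + (k:ℝ)^2*u^2)) atTop atTop :=
      (tendsto_atTop_add_const_left atTop a hsq).const_mul_atTop (by norm_num)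
    exact h1.inv_tendsto_atTop
  have hgt : Tendsto g atTop (nhds 0) := by
    have T1 := (hlog (σ^2)).const_mul (1/4)
    have T2 := (hlog (s^2)).const_mul (κ/4)
    have T3 := (hrat (σ^2)).const_mul σ
    have T4 := (hrat (s^2)).const_mul (κ*s)
    have := ((T1.sub T2).sub T3).add T4
    rw [hgdef]
    simpa using this
  have htend : Tendsto (fun t => Xi σ k t 0) atTop (nhds 0) := by rw [hfg]; exact hgt
  have hmono : MonotoneOn (fun t => Xi σ k t 0) (Set.Ici 1) := by rw [hfg]; exact hgm
  refine ⟨?_, hmono, htend⟩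
  intro t ht
  refine ge_of_tendsto htend ?_
  filter_upwards [eventually_ge_atTop t, eventually_ge_atTop (1:ℝ)] with u hu h1u
  exact hmono ht h1u hu
end

section
/- For every integer k ≥ 3, every real σ with 1 ≤ σ ≤ 1.15, and every real t ≥ 1, one has Ξ(σ,k,t,1) ≤ 0. -/
set_option maxHeartbeats 1000000
set_option maxRecDepth 100000

lemma log_upper {u : ℝ} (hu : 0 ≤ u) :
    Real.log (1 + u) ≤ ((1 + u) - (1 + u)⁻¹) / 2 := by
  have h0 : (0:ℝ) < 1 + u := by linarith
  have h1 : Real.log (1 + u) ≤ Real.sinh (Real.log (1 + u)) :=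
    Real.self_le_sinh_iff.mpr (Real.log_nonneg (by linarith))
  rwa [Real.sinh_log h0] at h1

lemma log_lower {u : ℝ} (hu : 0 ≤ u) :
    2 * u / (2 + u) ≤ Real.log (1 + u) := by
  set f : ℝ → ℝ := fun s => Real.log (1 + s) + 4 * (2 + s)⁻¹ - 2 with hf
  have hder : ∀ s ∈ Set.Ici (0:ℝ), HasDerivAt f ((1 + s)⁻¹ - 4 * ((2 + s)^2)⁻¹) s := by
    intro s hs
    have hs0 : (0:ℝ) ≤ s := hs
    have h1 : HasDerivAt (fun s : ℝ => 1 + s) 1 s := by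
      simpa using (hasDerivAt_id s).const_add 1
    have h2 : HasDerivAt (fun s : ℝ => 2 + s) 1 s := by
      simpa using (hasDerivAt_id s).const_add 2
    have hlog : HasDerivAt (fun s : ℝ => Real.log (1 + s)) ((1+s)⁻¹ * 1) s :=
      (Real.hasDerivAt_log (by linarith)).comp s h1
    have hinv : HasDerivAt (fun s : ℝ => (2 + s)⁻¹) (-1 / (2+s)^2) s := by
      exact h2.inv (by linarith)
    have := (hlog.add ((hinv.const_mul 4))).sub_const 2
    refine this.congr_deriv ?_
    ring
  have hmono : MonotoneOn f (Set.Ici 0) := by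
    apply monotoneOn_of_deriv_nonneg (convex_Ici 0)
    · apply ContinuousOn.sub
      apply ContinuousOn.add
      · exact (Real.continuousOn_log.comp (by fun_prop) (by intro s hs; simp only [Set.mem_Ici] at hs; intro h; simp at h; nlinarith)).congr (fun s hs => rfl)
      · exact ContinuousOn.mul continuousOn_const (ContinuousOn.inv₀ (by fun_prop) (by intro s hs; simp only [Set.mem_Ici] at hs; positivity))
      · exact continuousOn_const
    · intro s hs
      rw [interior_Ici] at hs
      exact ((hder s (Set.mem_Ici.mpr (le_of_lt hs))).differentiableAt).differentiableWithinAt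
    · intro s hs
      rw [interior_Ici] at hs
      have h := (hder s (Set.mem_Ici.mpr (le_of_lt hs))).deriv
      rw [h]
      have : (0:ℝ) < s := hs
      rw [sub_nonneg]
      have e1 : 4 * ((2+s)^2)⁻¹ = 4/(2+s)^2 := by ring
      have e2 : (1+s)⁻¹ = 1/(1+s) := by ring
      rw [e1, e2, div_le_div_iff₀ (by positivity) (by positivity)]
      nlinarith
  have h0 : f 0 = 0 := by
    simp [hf]
    norm_num
  have hge := hmono (Set.self_mem_Ici) (Set.mem_Ici.mpr hu) hu
  rw [h0] at hge
  have h2u : (0:ℝ) < 2 + u := by linarith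
  have hge' : Real.log (1 + u) + 4 * (2 + u)⁻¹ - 2 ≥ 0 := hge
  have e : 2 * u / (2 + u) = 2 - 4 * (2 + u)⁻¹ := by
    field_simp
    ring
  rw [e]
  linarith

lemma subA (a b K : ℝ) (ha : 2 ≤ a) (ha' : a ≤ 2.15) (hab : a + 0.6 ≤ b)
    (hb' : b ≤ 2.76) (hK : 0.4472 ≤ K) (hK' : K ≤ 0.44722) :
    4*a^2 - 8*a + 8*K*b - 4*K*b^2 ≤ 0 := by
  nlinarith [mul_nonneg (sub_nonneg.mpr hK) (sub_nonneg.mpr hab), sq_nonneg (a-2), sq_nonneg (b-2.6), mul_nonneg (sub_nonneg.mpr ha) (sub_nonneg.mpr hab)]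


lemma subB' (p e q : ℝ) (hp : 0 ≤ p) (hp' : p ≤ 3/20) (he : 0 ≤ e) (he' : e ≤ 4/25)
    (hq : 0 ≤ q) (hq' : q ≤ 1/50000) :
    (-11510168/390625) + (-85904/625)*q + (-8779654/78125)*e + (-31412/125)*e*q + (-1027442/15625)*e^2 + (-3676/25)*e^2*q + (-52546/3125)*e^3 + (-188/5)*e^3*q + (-1118/625)*e^4 + (-4)*e^4*q + (1685806/78125)*p + (-34532/125)*p*q + (-1437644/15625)*p*e + (-8632/25)*p*e*q + (-142498/3125)*p*e^2 + (-644/5)*p*e^2*q + (-4472/625)*p*e^3 + (-16)*p*e^3*q + (929946/15625)*p^2 + (-5112/25)*p^2*q + (-47746/3125)*p^2*e + (-788/5)*p^2*e*q + (-4076/625)*p^2*e^2 + (-28)*p^2*e^2*q + (92206/3125)*p^3 + (-332/5)*p^3*q + (792/625)*p^3*e + (-24)*p^3*e*q + (2764/625)*p^4 + (-8)*p^4*q ≤ 0 := by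
  have h1 : (0:ℝ) ≤ q := by positivity
  have h2 : (0:ℝ) ≤ e := by positivity
  have h3 : (0:ℝ) ≤ e*q := by positivity
  have h4 : (0:ℝ) ≤ e^2 := by positivity
  have h5 : (0:ℝ) ≤ e^2*q := by positivity
  have h6 : (0:ℝ) ≤ e^3 := by positivity
  have h7 : (0:ℝ) ≤ e^3*q := by positivity
  have h8 : (0:ℝ) ≤ e^4 := by positivity
  have h9 : (0:ℝ) ≤ e^4*q := by positivity
  have h10 : p ≤ (3/20) := hp'
  have h11 : (0:ℝ) ≤ p*q := by positivity
  have h12 : (0:ℝ) ≤ p*e := by positivity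
  have h13 : (0:ℝ) ≤ p*e*q := by positivity
  have h14 : (0:ℝ) ≤ p*e^2 := by positivity
  have h15 : (0:ℝ) ≤ p*e^2*q := by positivity
  have h16 : (0:ℝ) ≤ p*e^3 := by positivity
  have h17 : (0:ℝ) ≤ p*e^3*q := by positivity
  have h18 : p^2 ≤ (3/20)^2 := by gcongr
  have h19 : (0:ℝ) ≤ p^2*q := by positivity
  have h20 : (0:ℝ) ≤ p^2*e := by positivity
  have h21 : (0:ℝ) ≤ p^2*e*q := by positivity
  have h22 : (0:ℝ) ≤ p^2*e^2 := by positivity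
  have h23 : (0:ℝ) ≤ p^2*e^2*q := by positivity
  have h24 : p^3 ≤ (3/20)^3 := by gcongr
  have h25 : (0:ℝ) ≤ p^3*q := by positivity
  have h26 : p^3*e ≤ (3/20)^3*(4/25) := by gcongr
  have h27 : (0:ℝ) ≤ p^3*e*q := by positivity
  have h28 : p^4 ≤ (3/20)^4 := by gcongr
  have h29 : (0:ℝ) ≤ p^4*q := by positivity
  linarith [h1, h2, h3, h4, h5, h6, h7, h8, h9, h10, h11, h12, h13, h14, h15, h16, h17, h18, h19, h20, h21, h22, h23, h24, h25, h26, h27, h28, h29]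

lemma subC' (p e q : ℝ) (hp : 0 ≤ p) (hp' : p ≤ 3/20) (he : 0 ≤ e) (he' : e ≤ 4/25)
    (hq : 0 ≤ q) (hq' : q ≤ 1/50000) :
    (-1008008906/390625) + (-12332268/625)*q + (-1025451518/78125)*e + (-4611204/125)*e*q + (-119671464/15625)*e^2 + (-488592/25)*e^2*q + (-5627882/3125)*e^3 + (-21996/5)*e^3*q + (-120806/625)*e^4 + (-468)*e^4*q + (4177322362/390625)*p + (-26850564/625)*p*q + (-473913184/78125)*p*e + (-6304752/125)*p*e*q + (-54654642/15625)*p*e^2 + (-480276/25)*p*e^2*q + (-2097776/3125)*p*e^3 + (-16128/5)*p*e^3*q + (2252/625)*p*e^4 + (-144)*p*e^4*q + (6759084418/390625)*p^2 + (-20257596/625)*p^2*q + (467776344/78125)*p^2*e + (-3507768/125)*p^2*e*q + (20485782/15625)*p^2*e^2 + (-209304/25)*p^2*e^2*q + (937126/3125)*p^2*e^3 + (-4572/5)*p^2*e^3*q + (16188/625)*p^2*e^4 + (-36)*p^2*e^4*q + (844238504/78125)*p^3 + (-1656288/125)*p^3*q + (86695604/15625)*p^3*e + (-223488/25)*p^3*e*q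 + (4432818/3125)*p^3*e^2 + (-9396/5)*p^3*e^2*q + (116752/625)*p^3*e^3 + (-144)*p^3*e^3*q + (8)*p^3*e^4 + (64838242/15625)*p^4 + (-83124/25)*p^4*q + (6757748/3125)*p^4*e + (-7956/5)*p^4*e*q + (295353/625)*p^4*e^2 + (-216)*p^4*e^2*q + (212/5)*p^4*e^3 + (1)*p^4*e^4 + (3250796/3125)*p^5 + (-2412/5)*p^5*q + (305202/625)*p^5*e + (-144)*p^5*e*q + (396/5)*p^5*e^2 + (4)*p^5*e^3 + (110413/625)*p^6 + (-36)*p^6*q + (316/5)*p^6*e + (6)*p^6*e^2 + (92/5)*p^7 + (4)*p^7*e + (1)*p^8 ≤ 0 := by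
  have h1 : (0:ℝ) ≤ q := by positivity
  have h2 : (0:ℝ) ≤ e := by positivity
  have h3 : (0:ℝ) ≤ e*q := by positivity
  have h4 : (0:ℝ) ≤ e^2 := by positivity
  have h5 : (0:ℝ) ≤ e^2*q := by positivity
  have h6 : (0:ℝ) ≤ e^3 := by positivity
  have h7 : (0:ℝ) ≤ e^3*q := by positivity
  have h8 : (0:ℝ) ≤ e^4 := by positivity
  have h9 : (0:ℝ) ≤ e^4*q := by positivity
  have h10 : p ≤ (3/20) := hp'
  have h11 : (0:ℝ) ≤ p*q := by positivity
  have h12 : (0:ℝ) ≤ p*e := by positivity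
  have h13 : (0:ℝ) ≤ p*e*q := by positivity
  have h14 : (0:ℝ) ≤ p*e^2 := by positivity
  have h15 : (0:ℝ) ≤ p*e^2*q := by positivity
  have h16 : (0:ℝ) ≤ p*e^3 := by positivity
  have h17 : (0:ℝ) ≤ p*e^3*q := by positivity
  have h18 : p*e^4 ≤ (3/20)*(4/25)^4 := by gcongr
  have h19 : (0:ℝ) ≤ p*e^4*q := by positivity
  have h20 : p^2 ≤ (3/20)^2 := by gcongr
  have h21 : (0:ℝ) ≤ p^2*q := by positivity
  have h22 : p^2*e ≤ (3/20)^2*(4/25) := by gcongr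
  have h23 : (0:ℝ) ≤ p^2*e*q := by positivity
  have h24 : p^2*e^2 ≤ (3/20)^2*(4/25)^2 := by gcongr
  have h25 : (0:ℝ) ≤ p^2*e^2*q := by positivity
  have h26 : p^2*e^3 ≤ (3/20)^2*(4/25)^3 := by gcongr
  have h27 : (0:ℝ) ≤ p^2*e^3*q := by positivity
  have h28 : p^2*e^4 ≤ (3/20)^2*(4/25)^4 := by gcongr
  have h29 : (0:ℝ) ≤ p^2*e^4*q := by positivity
  have h30 : p^3 ≤ (3/20)^3 := by gcongr
  have h31 : (0:ℝ) ≤ p^3*q := by positivity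
  have h32 : p^3*e ≤ (3/20)^3*(4/25) := by gcongr
  have h33 : (0:ℝ) ≤ p^3*e*q := by positivity
  have h34 : p^3*e^2 ≤ (3/20)^3*(4/25)^2 := by gcongr
  have h35 : (0:ℝ) ≤ p^3*e^2*q := by positivity
  have h36 : p^3*e^3 ≤ (3/20)^3*(4/25)^3 := by gcongr
  have h37 : (0:ℝ) ≤ p^3*e^3*q := by positivity
  have h38 : p^3*e^4 ≤ (3/20)^3*(4/25)^4 := by gcongr
  have h39 : p^4 ≤ (3/20)^4 := by gcongr
  have h40 : (0:ℝ) ≤ p^4*q := by positivity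
  have h41 : p^4*e ≤ (3/20)^4*(4/25) := by gcongr
  have h42 : (0:ℝ) ≤ p^4*e*q := by positivity
  have h43 : p^4*e^2 ≤ (3/20)^4*(4/25)^2 := by gcongr
  have h44 : (0:ℝ) ≤ p^4*e^2*q := by positivity
  have h45 : p^4*e^3 ≤ (3/20)^4*(4/25)^3 := by gcongr
  have h46 : p^4*e^4 ≤ (3/20)^4*(4/25)^4 := by gcongr
  have h47 : p^5 ≤ (3/20)^5 := by gcongr
  have h48 : (0:ℝ) ≤ p^5*q := by positivity
  have h49 : p^5*e ≤ (3/20)^5*(4/25) := by gcongr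
  have h50 : (0:ℝ) ≤ p^5*e*q := by positivity
  have h51 : p^5*e^2 ≤ (3/20)^5*(4/25)^2 := by gcongr
  have h52 : p^5*e^3 ≤ (3/20)^5*(4/25)^3 := by gcongr
  have h53 : p^6 ≤ (3/20)^6 := by gcongr
  have h54 : (0:ℝ) ≤ p^6*q := by positivity
  have h55 : p^6*e ≤ (3/20)^6*(4/25) := by gcongr
  have h56 : p^6*e^2 ≤ (3/20)^6*(4/25)^2 := by gcongr
  have h57 : p^7 ≤ (3/20)^7 := by gcongr
  have h58 : p^7*e ≤ (3/20)^7*(4/25) := by gcongr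
  have h59 : p^8 ≤ (3/20)^8 := by gcongr
  linarith [h1, h2, h3, h4, h5, h6, h7, h8, h9, h10, h11, h12, h13, h14, h15, h16, h17, h18, h19, h20, h21, h22, h23, h24, h25, h26, h27, h28, h29, h30, h31, h32, h33, h34, h35, h36, h37, h38, h39, h40, h41, h42, h43, h44, h45, h46, h47, h48, h49, h50, h51, h52, h53, h54, h55, h56, h57, h58, h59]


lemma subB (a b K : ℝ) (ha : 2 ≤ a) (ha' : a ≤ 2.15) (hab : a + 0.6 ≤ b)
    (hb' : b ≤ 2.76) (hK : 0.4472 ≤ K) (hK' : K ≤ 0.44722) :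
    2*a^4 + 6*a^2*b^2 - 12*a*b^2 + 4*K*b^3 - 4*K*b^4 + 8*K*a^2*b - 4*K*a^2*b^2 ≤ 0 := by
  have h := subB' (a-2) (b-a-3/5) (K-2795/6250) (by linarith) (by linarith)
    (by linarith) (by linarith) (by linarith) (by linarith)
  nlinarith [h]

lemma subC (a b K : ℝ) (ha : 2 ≤ a) (ha' : a ≤ 2.15) (hab : a + 0.6 ≤ b)
    (hb' : b ≤ 2.76) (hK : 0.4472 ≤ K) (hK' : K ≤ 0.44722) :
    729*(4*a^2 - 8*a + 8*K*b - 4*K*b^2)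
      + 81*(2*a^4 + 6*a^2*b^2 - 12*a*b^2 + 4*K*b^3 - 4*K*b^4 + 8*K*a^2*b - 4*K*a^2*b^2)
      + 9*(-(4)*a*b^4 + 4*K*a^2*b^3 + 2*a^2*b^4 - 4*K*a^2*b^4 + 3*a^4*b^2)
      + a^4*b^4 ≤ 0 := by
  have h := subC' (a-2) (b-a-3/5) (K-2795/6250) (by linarith) (by linarith)
    (by linarith) (by linarith) (by linarith) (by linarith)
  nlinarith [h]

lemma keyP (a b K X : ℝ) (ha : 2 ≤ a) (ha' : a ≤ 2.15) (hab : a + 0.6 ≤ b)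
    (hb' : b ≤ 2.76) (hK : 0.4472 ≤ K) (hK' : K ≤ 0.44722) (hX : 9 ≤ X) :
    a^2*(2*X+a^2)*(X+b^2)*(2*X+b^2) + 4*K*b*X*(X+a^2)*(2*X+b^2)
      ≤ 4*K*b^2*X*(X+a^2)*(X+b^2) + 4*a*X*(X+b^2)*(2*X+b^2) := by
  have hc3 := subA a b K ha ha' hab hb' hK hK'
  have hc2 := subB a b K ha ha' hab hb' hK hK'
  have hc9 := subC a b K ha ha' hab hb' hK hK'
  have hX0 : (0:ℝ) ≤ X := by linarith
  have hX3 : (0:ℝ) ≤ X^3 - 81*X := by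
    nlinarith [mul_nonneg (mul_nonneg hX0 (show (0:ℝ) ≤ X - 9 by linarith)) (show (0:ℝ) ≤ X + 9 by linarith)]
  have hX2 : (0:ℝ) ≤ X^2 - 9*X := by nlinarith
  have h1 : (4*a^2 - 8*a + 8*K*b - 4*K*b^2)*(X^3-81*X) ≤ 0 :=
    mul_nonpos_iff.mpr (Or.inr ⟨hc3, hX3⟩)
  have h2 : (2*a^4 + 6*a^2*b^2 - 12*a*b^2 + 4*K*b^3 - 4*K*b^4 + 8*K*a^2*b - 4*K*a^2*b^2)*(X^2-9*X) ≤ 0 :=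
    mul_nonpos_iff.mpr (Or.inr ⟨hc2, hX2⟩)
  have h3 := mul_le_mul_of_nonneg_right hc9 hX0
  have hc0 : (0:ℝ) ≤ a^4*b^4 := by positivity
  have h4 : a^4*b^4*(9-X) ≤ 0 := mul_nonpos_iff.mpr (Or.inl ⟨hc0, by linarith⟩)
  nlinarith [h1, h2, h3, h4]

/-- For `k ≥ 3`, `1 ≤ σ ≤ 1.15` and `t ≥ 1`: `Ξ(σ,k,t,1) ≤ 0`. -/
theorem Xi_delta_one_nonpos (k : ℕ) (hk : 3 ≤ k) (σ : ℝ)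
    (hσ : 1 ≤ σ) (hσ' : σ ≤ 1.15) (t : ℝ) (ht : 1 ≤ t) :
    Xi σ k t 1 ≤ 0 := by
  have hk3 : (3:ℝ) ≤ (k:ℝ) := by exact_mod_cast hk
  set x : ℝ := (k:ℝ) * t with hxdef
  have hx3 : (3:ℝ) ≤ x := by
    calc (3:ℝ) = 3 * 1 := by ring
    _ ≤ (k:ℝ) * t := by
        apply mul_le_mul hk3 ht (by norm_num) (by linarith)
  have hx0 : (0:ℝ) < x := by linarith
  set a : ℝ := σ + 1 with hadef
  have ha : 2 ≤ a := by simp [hadef]; linarith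
  have ha' : a ≤ 2.15 := by simp [hadef]; linarith
  set s : ℝ := Real.sqrt (1 + 4 * σ ^ 2) with hsdef
  have hs0 : 0 ≤ s := Real.sqrt_nonneg _
  have hs2 : s ^ 2 = 1 + 4 * σ ^ 2 := Real.sq_sqrt (by positivity)
  have hb_eq : σ₁ σ + 1 = (3 + s) / 2 := by
    simp [σ₁, hsdef]; ring
  set b : ℝ := σ₁ σ + 1 with hbdef
  have hslow : 2 * σ + 0.2 ≤ s := by
    rw [hsdef, show (2 * σ + 0.2 : ℝ) = Real.sqrt ((2 * σ + 0.2) ^ 2) from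
      (Real.sqrt_sq (by linarith)).symm]
    apply Real.sqrt_le_sqrt
    nlinarith
  have hshigh : s ≤ 2.52 := by
    rw [hsdef, show (2.52 : ℝ) = Real.sqrt (2.52 ^ 2) from
      (Real.sqrt_sq (by norm_num)).symm]
    apply Real.sqrt_le_sqrt
    nlinarith
  have hab : a + 0.6 ≤ b := by
    rw [hb_eq, hadef]; nlinarith [hslow]
  have hb' : b ≤ 2.76 := by
    rw [hb_eq]; nlinarith [hshigh]
  have hb2 : 2.6 ≤ b := by linarith
  have h5l : (2.23606 : ℝ) ≤ Real.sqrt 5 := by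
    rw [show (2.23606 : ℝ) = Real.sqrt (2.23606 ^ 2) from (Real.sqrt_sq (by norm_num)).symm]
    apply Real.sqrt_le_sqrt; norm_num
  have h5u : Real.sqrt 5 ≤ 2.23607 := by
    rw [show (2.23607 : ℝ) = Real.sqrt (2.23607 ^ 2) from (Real.sqrt_sq (by norm_num)).symm]
    apply Real.sqrt_le_sqrt; norm_num
  have hsq5 : (0:ℝ) < Real.sqrt 5 := by linarith
  have hK : 0.4472 ≤ κ := by
    rw [show κ = 1 / Real.sqrt 5 from rfl, le_div_iff₀ hsq5]
    nlinarith
  have hK' : κ ≤ 0.44722 := by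
    rw [show κ = 1 / Real.sqrt 5 from rfl, div_le_iff₀ hsq5]
    nlinarith
  -- unfold Xi
  have hkx : ((k:ℝ)) ^ 2 * t ^ 2 = x ^ 2 := by rw [hxdef]; ring
  have hXi : Xi σ k t 1 =
      1 / 4 * Real.log (1 + (a / x) ^ 2) - κ / 4 * Real.log (1 + (b / x) ^ 2)
        - a / (2 * (a ^ 2 + x ^ 2)) + κ * b / (2 * (b ^ 2 + x ^ 2)) := by
    rw [Xi, hadef, hbdef, hkx, hxdef]
  rw [hXi]
  have hu : (0:ℝ) ≤ (a / x) ^ 2 := by positivity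
  have hv : (0:ℝ) ≤ (b / x) ^ 2 := by positivity
  have hlog1 := log_upper hu
  have hlog2 := log_lower hv
  have hκ4 : (0:ℝ) ≤ κ / 4 := by linarith
  have step1 : 1 / 4 * Real.log (1 + (a / x) ^ 2) - κ / 4 * Real.log (1 + (b / x) ^ 2)
        - a / (2 * (a ^ 2 + x ^ 2)) + κ * b / (2 * (b ^ 2 + x ^ 2))
      ≤ 1 / 4 * (((1 + (a / x) ^ 2) - (1 + (a / x) ^ 2)⁻¹) / 2)
        - κ / 4 * (2 * (b / x) ^ 2 / (2 + (b / x) ^ 2))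
        - a / (2 * (a ^ 2 + x ^ 2)) + κ * b / (2 * (b ^ 2 + x ^ 2)) := by
    have h2 := mul_le_mul_of_nonneg_left hlog2 hκ4
    linarith
  refine le_trans step1 ?_
  -- now the rational inequality
  have hX9 : (9:ℝ) ≤ x ^ 2 := by nlinarith
  have hkey := keyP a b κ (x ^ 2) ha ha' hab hb' hK hK' hX9
  have hM : (0:ℝ) < 8 * x ^ 2 * (x ^ 2 + a ^ 2) * (x ^ 2 + b ^ 2) * (2 * x ^ 2 + b ^ 2) := by
    positivity
  have hEeq : 1 / 4 * (((1 + (a / x) ^ 2) - (1 + (a / x) ^ 2)⁻¹) / 2)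
        - κ / 4 * (2 * (b / x) ^ 2 / (2 + (b / x) ^ 2))
        - a / (2 * (a ^ 2 + x ^ 2)) + κ * b / (2 * (b ^ 2 + x ^ 2))
      = ((a^2*(2*(x^2)+a^2)*((x^2)+b^2)*(2*(x^2)+b^2) + 4*κ*b*(x^2)*((x^2)+a^2)*(2*(x^2)+b^2))
          - (4*κ*b^2*(x^2)*((x^2)+a^2)*((x^2)+b^2) + 4*a*(x^2)*((x^2)+b^2)*(2*(x^2)+b^2)))
        / (8 * x ^ 2 * (x ^ 2 + a ^ 2) * (x ^ 2 + b ^ 2) * (2 * x ^ 2 + b ^ 2)) := by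
    have hxne : x ≠ 0 := ne_of_gt hx0
    have d1 : (0:ℝ) < x ^ 2 + a ^ 2 := by positivity
    have d2 : (0:ℝ) < x ^ 2 + b ^ 2 := by positivity
    have d3 : (0:ℝ) < 2 * x ^ 2 + b ^ 2 := by positivity
    have d4 : (0:ℝ) < 1 + (a / x) ^ 2 := by positivity
    have d5 : (0:ℝ) < 2 + (b / x) ^ 2 := by positivity
    field_simp
    ring
  rw [hEeq]
  apply div_nonpos_of_nonpos_of_nonneg _ (le_of_lt hM)
  linarith [hkey]
end

section
/- Let d₁ > 0 and r > 0 be real numbers with r² ≥ d₁²·(1 + (1-κ)r/2)², and let c > 0 satisfy c ≥ (√(r² - d₁²(1 + (1-κ)r/2)²) - (1-κ)r²/2) / (1 + (1-κ)r/2). Then 1/r - 2(r+c)/((r+c)² + d₁²) + (1-κ)/2 ≥ 0. Moreover, for d₁ = 1.0015 and r = 2.1163, the smallest such c, namely c_A = (√(r² - d₁²(1 + (1-κ)r/2)²) - (1-κ)r²/2)/(1 + (1-κ)r/2), satisfies c_A ≥ 1/9.7946. -/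
lemma sqrt5_sq : Real.sqrt 5 ^ 2 = 5 := Real.sq_sqrt (by norm_num)

lemma sqrt5_pos : 0 < Real.sqrt 5 := Real.sqrt_pos.mpr (by norm_num)

lemma sqrt5_lb : (2.2360679774 : ℝ) ≤ Real.sqrt 5 := by
  nlinarith [sqrt5_sq, sqrt5_pos]

lemma sqrt5_ub : Real.sqrt 5 ≤ (2.2360679775 : ℝ) := by
  nlinarith [sqrt5_sq, sqrt5_pos]

lemma kappa_lb : (0.4472135954 : ℝ) ≤ κ := by
  unfold κ
  rw [le_div_iff₀ sqrt5_pos]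
  nlinarith [sqrt5_ub, sqrt5_pos]

lemma kappa_ub : κ ≤ (0.4472135956 : ℝ) := by
  unfold κ
  rw [div_le_iff₀ sqrt5_pos]
  nlinarith [sqrt5_lb, sqrt5_pos]

/-- If `d₁, r > 0` with `r² ≥ d₁²(1 + (1-κ)r/2)²` and
`c ≥ (√(r² - d₁²(1+(1-κ)r/2)²) - (1-κ)r²/2)/(1 + (1-κ)r/2)`, `c > 0`, then
`1/r - 2(r+c)/((r+c)² + d₁²) + (1-κ)/2 ≥ 0`; moreover for `d₁ = 1.0015` and
`r = 2.1163` the smallest such `c` satisfies `c_A ≥ 1/9.7946`. -/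
theorem region_A_bound :
    (∀ d₁ r c : ℝ, 0 < d₁ → 0 < r → 0 < c →
      d₁ ^ 2 * (1 + (1 - κ) * r / 2) ^ 2 ≤ r ^ 2 →
      (Real.sqrt (r ^ 2 - d₁ ^ 2 * (1 + (1 - κ) * r / 2) ^ 2) -
          (1 - κ) * r ^ 2 / 2) / (1 + (1 - κ) * r / 2) ≤ c →
      0 ≤ 1 / r - 2 * (r + c) / ((r + c) ^ 2 + d₁ ^ 2) + (1 - κ) / 2) ∧
    1 / 9.7946 ≤
      (Real.sqrt (2.1163 ^ 2 - 1.0015 ^ 2 * (1 + (1 - κ) * 2.1163 / 2) ^ 2) -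
          (1 - κ) * 2.1163 ^ 2 / 2) / (1 + (1 - κ) * 2.1163 / 2) := by
  have hkl := kappa_lb
  have hku := kappa_ub
  constructor
  · intro d₁ r c hd hr hc hle hc2
    set a : ℝ := 1 + (1 - κ) * r / 2 with ha_def
    clear_value a
    have ha : 0 < a := by
      have : 0 < (1 - κ) * r / 2 := by
        apply div_pos (mul_pos (by linarith) hr) (by norm_num)
      linarith
    set s : ℝ := Real.sqrt (r ^ 2 - d₁ ^ 2 * a ^ 2) with hs_def
    clear_value s
    have hs2 : s ^ 2 = r ^ 2 - d₁ ^ 2 * a ^ 2 := by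
      rw [hs_def]; exact Real.sq_sqrt (by linarith)
    have hs0 : 0 ≤ s := by rw [hs_def]; exact Real.sqrt_nonneg _
    have hc2' : s - (1 - κ) * r ^ 2 / 2 ≤ c * a := by
      rw [div_le_iff₀ ha] at hc2
      linarith
    have h1 : s ≤ a * (r + c) - r := by
      have : a * (r + c) - r = c * a + (1 - κ) * r ^ 2 / 2 := by
        rw [ha_def]; ring
      linarith
    have hax : 0 ≤ a * (r + c) - r := le_trans hs0 h1
    have h2 : 0 ≤ a * (a * ((r + c) ^ 2 + d₁ ^ 2) - 2 * r * (r + c)) := by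
      nlinarith [mul_le_mul h1 h1 hs0 hax, hs2]
    have key : 0 ≤ a * ((r + c) ^ 2 + d₁ ^ 2) - 2 * r * (r + c) := by
      nlinarith [h2, ha]
    have hden : 0 < (r + c) ^ 2 + d₁ ^ 2 := by positivity
    have heq : 1 / r - 2 * (r + c) / ((r + c) ^ 2 + d₁ ^ 2) + (1 - κ) / 2 =
        (a * ((r + c) ^ 2 + d₁ ^ 2) - 2 * r * (r + c)) /
          (r * ((r + c) ^ 2 + d₁ ^ 2)) := by
      rw [ha_def]
      field_simp
      ring
    rw [heq]
    exact div_nonneg key (by positivity)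
  · have hapos : (0 : ℝ) < 1 + (1 - κ) * 2.1163 / 2 := by nlinarith
    have hq : (1.39970638 : ℝ) ≤
        Real.sqrt (2.1163 ^ 2 - 1.0015 ^ 2 * (1 + (1 - κ) * 2.1163 / 2) ^ 2) := by
      rw [show (1.39970638 : ℝ) = Real.sqrt (1.39970638 ^ 2) by
        rw [Real.sqrt_sq (by norm_num)]]
      apply Real.sqrt_le_sqrt
      nlinarith [hkl, hku]
    rw [le_div_iff₀ hapos]
    nlinarith [hq, hkl, hku]
end
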